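/- Let N ≥ 1, M ≥ 1, K = N·M, and let P_1, …, P_N be pairwise disjoint subsets of Fin K with |P_j| = M for all j whose union is all of Fin K. Define f(w) = Σ_{j=1}^N ∏_{k ∈ P_j} w_k (operations in ZMod 2). Then for every n ∈ [N], the joint influence of P_n on f equals 1/2^{M−1}, and consequently the average joint sensitivity of the placement configuration S* = (P_1, …, P_N) satisfies as_{S*}(f) = Σ_{n=1}^N Inf_{P_n}(f) = N/2^{M−1}. -/

import Mathlib

open Finset

/-- Indicator vector of a finite set of coordinates: `(𝟙_S)_k = 1` iff `k ∈ S`. -/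
def indVec {K : ℕ} (S : Finset (Fin K)) : Fin K → ZMod 2 :=
  fun k => if k ∈ S then 1 else 0

/-- Joint influence of the set `S` of coordinates on the Boolean function `f`:
the normalized count of inputs `w` for which flipping exactly the coordinates in `S`
changes the value of `f`. -/
def jointInf {K : ℕ} (S : Finset (Fin K)) (f : (Fin K → ZMod 2) → ZMod 2) : ℚ :=
  ((Finset.univ.filter fun w : Fin K → ZMod 2 => f (w + indVec S) ≠ f w).card : ℚ) / 2 ^ K

lemma card_const {K : ℕ} (S : Finset (Fin K)) (c : ZMod 2) :
    (Finset.univ.filter fun w : Fin K → ZMod 2 => ∀ k ∈ S, w k = c).card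
      = 2 ^ (K - S.card) := by
  have he : (Finset.univ.filter fun w : Fin K → ZMod 2 => ∀ k ∈ S, w k = c)
      = Fintype.piFinset (fun k => if k ∈ S then {c} else Finset.univ) := by
    ext w
    simp only [Finset.mem_filter, Finset.mem_univ, true_and, Fintype.mem_piFinset]
    constructor
    · intro h k
      by_cases hk : k ∈ S <;> simp [hk, h k]
    · intro h k hk
      have := h k
      simpa [hk] using this
  rw [he, Fintype.card_piFinset]
  simp only [apply_ite Finset.card, Finset.card_singleton, Finset.card_univ, ZMod.card]
  rw [Finset.prod_ite, Finset.prod_const, Finset.prod_const, one_pow, one_mul]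
  have : Finset.univ.filter (fun k => ¬ k ∈ S) = Sᶜ := by
    ext k; simp [Finset.mem_compl]
  rw [this, Finset.card_compl]
  simp [Fintype.card_fin]

lemma zmod2_cases (a : ZMod 2) : a = 0 ∨ a = 1 := by revert a; decide

lemma prod_eq_one_iff {K : ℕ} (g : Fin K → ZMod 2) (s : Finset (Fin K)) :
    (∏ k ∈ s, g k) = 1 ↔ ∀ k ∈ s, g k = 1 := by
  constructor
  · intro h k hk
    by_contra hne
    have hk0 : g k = 0 := (zmod2_cases (g k)).resolve_right hne
    have h0 : (∏ k ∈ s, g k) = 0 := Finset.prod_eq_zero hk hk0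
    rw [h] at h0; exact one_ne_zero h0
  · exact Finset.prod_eq_one

theorem stmt7 (N M K : ℕ) (hN : 1 ≤ N) (hM : 1 ≤ M) (hK : K = N * M)
    (P : Fin N → Finset (Fin K))
    (hdisj : ∀ i j, i ≠ j → Disjoint (P i) (P j))
    (hcard : ∀ j, (P j).card = M)
    (hcover : (Finset.univ : Finset (Fin N)).biUnion P = Finset.univ)
    (f : (Fin K → ZMod 2) → ZMod 2)
    (hf : ∀ w, f w = ∑ j : Fin N, ∏ k ∈ P j, w k) :
    (∀ n : Fin N, jointInf (P n) f = 1 / 2 ^ (M - 1)) ∧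
    (∑ n : Fin N, jointInf (P n) f) = N / 2 ^ (M - 1) := by
  have hMK : M ≤ K := by
    rw [hK]; calc M = 1 * M := (one_mul M).symm
    _ ≤ N * M := Nat.mul_le_mul_right M hN
  have h1 : ∀ n : Fin N, jointInf (P n) f = 1 / 2 ^ (M - 1) := by
    intro n
    have hPn : (P n).Nonempty := Finset.card_pos.mp (by rw [hcard]; exact hM)
    have hnb : ∀ w : Fin K → ZMod 2,
        ¬((∀ k ∈ P n, w k = 0) ∧ (∀ k ∈ P n, w k = 1)) := by
      rintro w ⟨h0, h1⟩
      obtain ⟨k, hk⟩ := hPn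
      have : (0 : ZMod 2) = 1 := (h0 k hk).symm.trans (h1 k hk)
      exact absurd this (by decide)
    have hset : (Finset.univ.filter fun w : Fin K → ZMod 2 => f (w + indVec (P n)) ≠ f w)
        = (Finset.univ.filter fun w : Fin K → ZMod 2 => ∀ k ∈ P n, w k = 0)
          ∪ (Finset.univ.filter fun w : Fin K → ZMod 2 => ∀ k ∈ P n, w k = 1) := by
      ext w
      simp only [Finset.mem_filter, Finset.mem_union, Finset.mem_univ, true_and]
      have hB : ∏ k ∈ P n, (w + indVec (P n)) k = ∏ k ∈ P n, (w k + 1) :=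
        Finset.prod_congr rfl fun k hk => by simp [indVec, hk]
      have hfe : f (w + indVec (P n))
          = (∏ k ∈ P n, (w k + 1)) + ∑ j ∈ Finset.univ.erase n, ∏ k ∈ P j, w k := by
        rw [hf, ← Finset.add_sum_erase _ _ (Finset.mem_univ n), hB]
        congr 1
        refine Finset.sum_congr rfl fun j hj => Finset.prod_congr rfl fun k hk => ?_
        have hkn : k ∉ P n :=
          Finset.disjoint_left.mp (hdisj j n (Finset.ne_of_mem_erase hj)) hk
        simp [indVec, hkn]
      have hfw : f w = (∏ k ∈ P n, w k) + ∑ j ∈ Finset.univ.erase n, ∏ k ∈ P j, w k := by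
        rw [hf, ← Finset.add_sum_erase _ _ (Finset.mem_univ n)]
      rw [hfe, hfw, ne_eq, add_left_inj]
      have hq1 : (∏ k ∈ P n, (w k + 1)) = 1 ↔ ∀ k ∈ P n, w k = 0 := by
        rw [prod_eq_one_iff]
        constructor
        · intro h k hk
          have h2 := h k hk
          rcases zmod2_cases (w k) with h0 | h0
          · exact h0
          · rw [h0] at h2; exact absurd h2 (by decide)
        · intro h k hk; rw [h k hk, zero_add]
      have hp1 : (∏ k ∈ P n, w k) = 1 ↔ ∀ k ∈ P n, w k = 1 := prod_eq_one_iff _ _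
      constructor
      · intro hne
        rcases zmod2_cases (∏ k ∈ P n, (w k + 1)) with hq | hq
        · right
          refine hp1.mp ((zmod2_cases _).resolve_left fun h => hne ?_)
          rw [hq, h]
        · left; exact hq1.mp hq
      · rintro (h0 | h1)
        · rw [hq1.mpr h0]
          have hp0 : (∏ k ∈ P n, w k) = 0 := by
            rcases zmod2_cases (∏ k ∈ P n, w k) with hp | hp
            · exact hp
            · exact absurd ⟨h0, hp1.mp hp⟩ (hnb w)
          rw [hp0]; exact one_ne_zero
        · rw [hp1.mpr h1]
          have hq0 : (∏ k ∈ P n, (w k + 1)) = 0 := by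
            rcases zmod2_cases (∏ k ∈ P n, (w k + 1)) with hq | hq
            · exact hq
            · exact absurd ⟨hq1.mp hq, h1⟩ (hnb w)
          rw [hq0]; exact zero_ne_one
    have hdisj2 : Disjoint
        (Finset.univ.filter fun w : Fin K → ZMod 2 => ∀ k ∈ P n, w k = 0)
        (Finset.univ.filter fun w : Fin K → ZMod 2 => ∀ k ∈ P n, w k = 1) := by
      rw [Finset.disjoint_left]
      intro w hw0 hw1
      simp only [Finset.mem_filter, Finset.mem_univ, true_and] at hw0 hw1
      exact hnb w ⟨hw0, hw1⟩
    unfold jointInf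
    rw [hset, Finset.card_union_of_disjoint hdisj2, card_const, card_const, hcard]
    push_cast
    rw [div_eq_div_iff (by positivity) (by positivity), one_mul]
    have hsum : ((2:ℚ) ^ (K - M) + 2 ^ (K - M)) = 2 ^ (K - M + 1) := by
      rw [pow_succ]; ring
    rw [hsum, ← pow_add]
    congr 1
    omega
  refine ⟨h1, ?_⟩
  rw [Finset.sum_congr rfl fun n _ => h1 n, Finset.sum_const, Finset.card_univ,
    Fintype.card_fin, nsmul_eq_mul, mul_one_div]
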